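/- Let S_1,…,S_K be bounded operators on a Hilbert space with ‖S_m‖ ≤ 1. Define μ_m = sup over i_m,…,i_K ∈ {0,1} of ‖(S_{m,i_m}S*_{m,i_m})[(S_{m+1,i_{m+1}}S*_{m+1,i_{m+1}}) + … + (S_{K,i_K}S*_{K,i_K})]‖ and D = sup over i_1,…,i_K of ‖S_{1,i_1}S*_{1,i_1} + … + S_{K,i_K}S*_{K,i_K}‖, where S_{m,0} = S_m, S_{m,1} = 0. Then for each m, the quantity ν_m = sup over i_m,…,i_K of ‖S*_{m,i_m}[(S_{m+1,i_{m+1}}S*_{m+1,i_{m+1}}) + … + (S_{K,i_K}S*_{K,i_K})]‖ satisfies ν_m² ≤ D·μ_m. -/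

import Mathlib

open scoped BigOperators

variable {H : Type*} [NormedAddCommGroup H] [InnerProductSpace ℂ H] [CompleteSpace H]

/-- `S_{m,0} = S_m`, `S_{m,1} = 0`. -/
def sel {K : ℕ} (S : Fin K → H →L[ℂ] H) (i : Fin K → Bool) (m : Fin K) : H →L[ℂ] H :=
  if i m then 0 else S m

/-- with `D`, `μ_m`, `ν_m` as defined via suprema over the choices `i ∈ {0,1}`,
one has `ν_m² ≤ D · μ_m` for each `m`. -/
theorem stmt4 (K : ℕ) (S : Fin K → H →L[ℂ] H) (hS : ∀ m, ‖S m‖ ≤ 1) (m : Fin K) :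
    (⨆ i : Fin K → Bool,
        ‖ContinuousLinearMap.adjoint (sel S i m) *
            ∑ n ∈ Finset.univ.filter (fun n => m < n),
              sel S i n * ContinuousLinearMap.adjoint (sel S i n)‖) ^ 2
      ≤ (⨆ i : Fin K → Bool, ‖∑ n, sel S i n * ContinuousLinearMap.adjoint (sel S i n)‖) *
        (⨆ i : Fin K → Bool,
          ‖(sel S i m * ContinuousLinearMap.adjoint (sel S i m)) *
              ∑ n ∈ Finset.univ.filter (fun n => m < n),
                sel S i n * ContinuousLinearMap.adjoint (sel S i n)‖) := by
  classical
  set f : (Fin K → Bool) → ℝ := fun i =>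
    ‖ContinuousLinearMap.adjoint (sel S i m) *
        ∑ n ∈ Finset.univ.filter (fun n => m < n),
          sel S i n * ContinuousLinearMap.adjoint (sel S i n)‖ with hfdef
  obtain ⟨i0, hi0⟩ := Finite.exists_max f
  have hsup : (⨆ i, f i) = f i0 :=
    le_antisymm (ciSup_le hi0) (le_ciSup (Set.Finite.bddAbove (Set.finite_range f)) i0)
  rw [hsup]
  set T : H →L[ℂ] H := sel S i0 m with hTdef
  set A : H →L[ℂ] H := ∑ n ∈ Finset.univ.filter (fun n => m < n),
      sel S i0 n * ContinuousLinearMap.adjoint (sel S i0 n) with hAdef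
  have hAstar : star A = A := by
    simp only [hAdef, star_sum, star_mul, ContinuousLinearMap.star_eq_adjoint,
      ContinuousLinearMap.adjoint_adjoint]
  have hf0 : f i0 = ‖(star T) * A‖ := by
    simp [hfdef, ContinuousLinearMap.star_eq_adjoint, hTdef, hAdef]
  have hsq : f i0 ^ 2 = ‖A * ((T * star T) * A)‖ := by
    rw [hf0, sq, ← CStarRing.norm_star_mul_self]
    congr 1
    rw [star_mul, star_star, hAstar]
    simp [mul_assoc]
  -- the index choice that kills all terms with `n ≤ m`
  set i1 : Fin K → Bool := fun n => if m < n then i0 n else true with hi1def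
  have hA1 : (∑ n, sel S i1 n * ContinuousLinearMap.adjoint (sel S i1 n)) = A := by
    rw [hAdef]
    have h1 : (∑ n, sel S i1 n * ContinuousLinearMap.adjoint (sel S i1 n))
        = ∑ n ∈ Finset.univ.filter (fun n => m < n),
            sel S i1 n * ContinuousLinearMap.adjoint (sel S i1 n) := by
      refine (Finset.sum_filter_of_ne ?_).symm
      intro n _ hne
      by_contra hmn
      apply hne
      have h0 : sel S i1 n = 0 := by simp [sel, hi1def, hmn]
      simp [h0]
    rw [h1]
    refine Finset.sum_congr rfl fun n hn => ?_
    have hmn : m < n := by simpa using hn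
    have : sel S i1 n = sel S i0 n := by simp [sel, hi1def, hmn]
    rw [this]
  have hbddD : BddAbove (Set.range fun i : Fin K → Bool =>
      ‖∑ n, sel S i n * ContinuousLinearMap.adjoint (sel S i n)‖) :=
    Set.Finite.bddAbove (Set.finite_range _)
  have hbddμ : BddAbove (Set.range fun i : Fin K → Bool =>
      ‖(sel S i m * ContinuousLinearMap.adjoint (sel S i m)) *
          ∑ n ∈ Finset.univ.filter (fun n => m < n),
            sel S i n * ContinuousLinearMap.adjoint (sel S i n)‖) :=
    Set.Finite.bddAbove (Set.finite_range _)
  have hD : ‖A‖ ≤ ⨆ i : Fin K → Bool,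
      ‖∑ n, sel S i n * ContinuousLinearMap.adjoint (sel S i n)‖ := by
    have := le_ciSup hbddD i1
    rw [hA1] at this
    exact this
  have hμ : ‖(T * star T) * A‖ ≤ ⨆ i : Fin K → Bool,
      ‖(sel S i m * ContinuousLinearMap.adjoint (sel S i m)) *
          ∑ n ∈ Finset.univ.filter (fun n => m < n),
            sel S i n * ContinuousLinearMap.adjoint (sel S i n)‖ := by
    have := le_ciSup hbddμ i0
    simpa [ContinuousLinearMap.star_eq_adjoint, hTdef, hAdef] using this
  calc f i0 ^ 2 = ‖A * ((T * star T) * A)‖ := hsq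
    _ ≤ ‖A‖ * ‖(T * star T) * A‖ := norm_mul_le _ _
    _ ≤ _ := mul_le_mul hD hμ (norm_nonneg _) (le_trans (norm_nonneg A) hD)
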